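/- Let p be a prime, H a finite p-group, and F_q a finite field of characteristic different from p. Let S ⊆ Sym(H) be a set of permutations of H that is a solving set for every F_q-colored Cayley digraph cay(H,e), e : H → F_q. Then S is a solving set for every right ideal I of F_q[H]. -/

import Mathlib

open Pointwise


/-- Convolution product on the group algebra `F[H]`. -/
def convolve {H F : Type*} [Group H] [Fintype H] [Field F] (f g : H → F) : H → F :=
  fun x => ∑ y : H, f y * g (y⁻¹ * x)

/-- Action of a permutation `g` on functions: `f^g (x) = f (x^{g⁻¹})`. -/
def permAct {Ω F : Type*} (g : Equiv.Perm Ω) (f : Ω → F) : Ω → F :=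
  fun x => f (g.symm x)

/-- `g` is an isomorphism from the colored Cayley digraph `cay(H,e)` to `cay(H,e')`. -/
def IsCayleyIso {H F : Type*} [Group H] (g : Equiv.Perm H) (e e' : H → F) : Prop :=
  ∀ x y : H, e' (g x * (g y)⁻¹) = e (x * y⁻¹)

/-- A submodule of `F[H]` is a right ideal if it is closed under right convolution. -/
def IsRightIdeal {H F : Type*} [Group H] [Fintype H] [Field F]
    (I : Submodule F (H → F)) : Prop :=
  ∀ a ∈ I, ∀ b : H → F, convolve a b ∈ I

section Aux

variable {H F : Type*} [Group H] [Fintype H] [DecidableEq H] [Field F]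

lemma permAct_mul (g h : Equiv.Perm H) (f : H → F) :
    permAct (g * h) f = permAct g (permAct h f) := by
  rfl

lemma permAct_one (f : H → F) : permAct (1 : Equiv.Perm H) f = f := rfl

/-- `permAct` as a linear map. -/
def permLin (g : Equiv.Perm H) : (H → F) →ₗ[F] (H → F) where
  toFun := permAct g
  map_add' := fun _ _ => rfl
  map_smul' := fun _ _ => rfl

lemma permAct_image_mul (a b : Equiv.Perm H) (s : Set (H → F)) :
    permAct (a * b) '' s = permAct a '' (permAct b '' s) := by
  rw [← Set.image_comp]
  apply Set.image_congr'
  intro f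
  rw [Function.comp_apply, permAct_mul]

/-- The setwise stabilizer of a subspace of `F[H]` in `Sym(H)`. -/
def stab (I : Submodule F (H → F)) : Subgroup (Equiv.Perm H) where
  carrier := {g | permAct g '' (I : Set (H → F)) = I}
  one_mem' := by
    have : permAct (1 : Equiv.Perm H) '' (I : Set (H → F)) = (I : Set (H → F)) := by
      rw [show permAct (1 : Equiv.Perm H) = (id : (H → F) → (H → F)) from funext permAct_one]
      exact Set.image_id _
    exact this
  mul_mem' := by
    intro a b ha hb
    show permAct (a * b) '' (I : Set (H → F)) = I
    rw [permAct_image_mul, hb, ha]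
  inv_mem' := by
    intro a ha
    show permAct a⁻¹ '' (I : Set (H → F)) = I
    conv_lhs => rw [← ha]
    rw [← permAct_image_mul, inv_mul_cancel]
    rw [show permAct (1 : Equiv.Perm H) = (id : (H → F) → (H → F)) from funext permAct_one]
    exact Set.image_id _

lemma mem_stab {I : Submodule F (H → F)} {g : Equiv.Perm H} :
    g ∈ stab I ↔ permAct g '' (I : Set (H → F)) = I := Iff.rfl

lemma stab_apply_mem {I : Submodule F (H → F)} {g : Equiv.Perm H} (hg : g ∈ stab I)
    {v : H → F} (hv : v ∈ I) : permAct g v ∈ I := by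
  have h2 : permAct g v ∈ permAct g '' (I : Set (H → F)) := ⟨v, hv, rfl⟩
  rw [mem_stab.mp hg] at h2
  exact h2

/-- The group of right translations inside `Sym(H)`. -/
def rtrans (H : Type*) [Group H] : Subgroup (Equiv.Perm H) where
  carrier := Set.range (fun h : H => Equiv.mulRight h)
  one_mem' := ⟨1, by ext x; simp⟩
  mul_mem' := by
    rintro _ _ ⟨a, rfl⟩ ⟨b, rfl⟩
    exact ⟨b * a, by ext x; simp [mul_assoc]⟩
  inv_mem' := by
    rintro _ ⟨a, rfl⟩
    exact ⟨a⁻¹, by ext x; simp⟩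

lemma mulRight_mem_rtrans (h : H) : Equiv.mulRight h ∈ rtrans H := ⟨h, rfl⟩

lemma permAct_mulRight_eq_convolve (v : H → F) (h : H) :
    permAct (Equiv.mulRight h) v = convolve v (Pi.single h 1) := by
  funext x
  have : ∀ y : H, v y * (Pi.single h (1 : F) : H → F) (y⁻¹ * x) =
      if y = x * h⁻¹ then v (x * h⁻¹) else 0 := by
    intro y
    rcases eq_or_ne y (x * h⁻¹) with rfl | hy
    · simp [Pi.single_apply, mul_assoc]
    · have : y⁻¹ * x ≠ h := by
        intro hc
        apply hy
        rw [← hc]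
        group
      simp [Pi.single_apply, this, hy]
  simp only [convolve, this, Finset.sum_ite_eq' Finset.univ (x * h⁻¹), Finset.mem_univ, if_true]
  simp [permAct]

lemma rtrans_le_stab {I : Submodule F (H → F)} (hI : IsRightIdeal I) :
    rtrans H ≤ stab I := by
  rintro _ ⟨h, rfl⟩
  rw [mem_stab]
  apply Set.eq_of_subset_of_subset
  · rintro _ ⟨v, hv, rfl⟩
    rw [permAct_mulRight_eq_convolve]
    exact hI v hv _
  · intro v hv
    refine ⟨permAct (Equiv.mulRight h⁻¹) v, ?_, ?_⟩
    · rw [permAct_mulRight_eq_convolve]; exact hI v hv _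
    · rw [← permAct_mul]
      have : Equiv.mulRight h * Equiv.mulRight h⁻¹ = 1 := by ext x; simp
      rw [this, permAct_one]

lemma mulRight_pow (h : H) (n : ℕ) :
    (Equiv.mulRight h) ^ n = Equiv.mulRight (h ^ n) := by
  induction n with
  | zero => ext x; simp
  | succ n ih =>
    rw [pow_succ, ih]
    ext x
    simp [Equiv.Perm.mul_apply, pow_succ', mul_assoc]

lemma isPGroup_rtrans {p : ℕ} (hH : IsPGroup p H) : IsPGroup p (rtrans H) := by
  rintro ⟨σ, h, rfl⟩
  obtain ⟨k, hk⟩ := hH h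
  refine ⟨k, ?_⟩
  ext1
  show (Equiv.mulRight h) ^ (p ^ k) = 1
  rw [mulRight_pow, hk]
  ext x; simp

/-- helper equiv `h ↦ x * h⁻¹`. -/
def eqvAux (x : H) : H ≃ H := (Equiv.inv H).trans (Equiv.mulLeft x)

lemma eqvAux_apply (x h : H) : eqvAux x h = x * h⁻¹ := rfl

lemma convolve_eq' (a b : H → F) (x : H) :
    convolve a b x = ∑ z : H, a (x * z⁻¹) * b z := by
  rw [convolve]
  rw [← Equiv.sum_comp (eqvAux x) (fun y => a y * b (y⁻¹ * x))]
  apply Finset.sum_congr rfl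
  intro z _
  rw [eqvAux_apply]
  congr 2
  group

/-- Any linear endomorphism commuting with right translations is a left convolution. -/
lemma conv_of_equivariant (T : (H → F) →ₗ[F] (H → F))
    (hT : ∀ h : H, ∀ v : H → F,
      T (permAct (Equiv.mulRight h) v) = permAct (Equiv.mulRight h) (T v)) (v : H → F) :
    T v = convolve (T (Pi.single 1 1)) v := by
  have hsingle : ∀ (h : H), Pi.single h (1:F) = permAct (Equiv.mulRight h) (Pi.single 1 1) := by
    intro h
    funext x
    simp only [permAct, Equiv.mulRight_symm, Equiv.coe_mulRight, Pi.single_apply]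
    by_cases hx : x = h
    · simp [hx]
    · have : x * h⁻¹ ≠ 1 := by
        intro hc; exact hx (by rwa [mul_inv_eq_one] at hc)
      simp [hx, this]
  have hv : v = ∑ h : H, v h • (Pi.single h (1:F) : H → F) := by
    funext x
    rw [Finset.sum_apply]
    have : ∀ h : H, (v h • (Pi.single h (1:F) : H → F)) x = if x = h then v h else 0 := by
      intro h
      simp [Pi.single_apply, mul_ite]
    simp only [this, Finset.sum_ite_eq Finset.univ x, Finset.mem_univ, if_true]
  conv_lhs => rw [hv]
  rw [map_sum]
  funext x
  rw [Finset.sum_apply, convolve_eq']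
  apply Finset.sum_congr rfl
  intro h _
  rw [map_smul, hsingle h, hT h]
  simp only [Pi.smul_apply, smul_eq_mul, permAct, Equiv.mulRight_symm, Equiv.coe_mulRight]
  ring

/-- Maschke-type averaged projection onto `I`, equivariant under a finite
permutation group `Q` stabilizing `I` whose order is invertible in `F`. -/
lemma maschke_proj (I : Submodule F (H → F)) (Q : Subgroup (Equiv.Perm H))
    (hQI : Q ≤ stab I) (hcard : (Nat.card Q : F) ≠ 0) :
    ∃ π : (H → F) →ₗ[F] (H → F),
      (∀ v, π v ∈ I) ∧ (∀ v ∈ I, π v = v) ∧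
      (∀ τ ∈ Q, ∀ v, π (permAct τ v) = permAct τ (π v)) := by
  classical
  obtain ⟨I', hI'⟩ := Submodule.exists_isCompl I
  set π₀ : (H → F) →ₗ[F] (H → F) := I.subtype ∘ₗ I.projectionOnto I' hI' with hπ₀
  have hπ₀mem : ∀ v, π₀ v ∈ I := fun v => (I.projectionOnto I' hI' v).2
  have hπ₀fix : ∀ v ∈ I, π₀ v = v := by
    intro v hv
    show (I.projectionOnto I' hI' v : H → F) = v
    rw [Submodule.projectionOnto_apply_left hI' ⟨v, hv⟩]
  haveI : Fintype Q := Fintype.ofFinite _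
  set c : F := (Nat.card Q : F)⁻¹ with hc
  set π : (H → F) →ₗ[F] (H → F) :=
    c • ∑ σ : Q, (permLin (σ : Equiv.Perm H)) ∘ₗ π₀ ∘ₗ (permLin ((σ : Equiv.Perm H)⁻¹)) with hπ
  have happly : ∀ v, π v = c • ∑ σ : Q,
      permAct (σ : Equiv.Perm H) (π₀ (permAct ((σ : Equiv.Perm H)⁻¹) v)) := by
    intro v
    rw [hπ]
    simp only [LinearMap.smul_apply, LinearMap.coe_sum, Finset.sum_apply, LinearMap.coe_comp,
      Function.comp_apply]
    rfl
  refine ⟨π, ?_, ?_, ?_⟩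
  · intro v
    rw [happly]
    apply Submodule.smul_mem
    apply Submodule.sum_mem
    intro σ _
    exact stab_apply_mem (hQI σ.2) (hπ₀mem _)
  · intro v hv
    rw [happly]
    have hterm : ∀ σ : Q,
        permAct (σ : Equiv.Perm H) (π₀ (permAct ((σ : Equiv.Perm H)⁻¹) v)) = v := by
      intro σ
      have h1 : permAct ((σ : Equiv.Perm H)⁻¹) v ∈ I :=
        stab_apply_mem (hQI (Q.inv_mem σ.2)) hv
      rw [hπ₀fix _ h1, ← permAct_mul, mul_inv_cancel, permAct_one]
    rw [Finset.sum_congr rfl (fun σ _ => hterm σ), Finset.sum_const, Finset.card_univ]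
    rw [← Nat.card_eq_fintype_card, ← Nat.cast_smul_eq_nsmul F, smul_smul, hc,
      inv_mul_cancel₀ hcard, one_smul]
  · intro τ hτ v
    rw [happly, happly]
    set t : Q := ⟨τ, hτ⟩
    have key : ∀ σ : Q, permAct ((σ : Equiv.Perm H)⁻¹) (permAct τ v) =
        permAct (((σ : Equiv.Perm H))⁻¹ * τ) v := by
      intro σ; rw [permAct_mul]
    have reindex : (∑ σ : Q,
        permAct (σ : Equiv.Perm H) (π₀ (permAct ((σ : Equiv.Perm H)⁻¹ * τ) v))) =
        ∑ σ : Q, permAct τ (permAct (σ : Equiv.Perm H)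
          (π₀ (permAct ((σ : Equiv.Perm H)⁻¹) v))) := by
      rw [← Equiv.sum_comp (Equiv.mulLeft t)
        (fun σ : Q => permAct (σ : Equiv.Perm H) (π₀ (permAct ((σ : Equiv.Perm H)⁻¹ * τ) v)))]
      apply Finset.sum_congr rfl
      intro σ _
      have hco : ((Equiv.mulLeft t σ : Q) : Equiv.Perm H) = τ * (σ : Equiv.Perm H) := rfl
      rw [hco]
      have : (τ * (σ : Equiv.Perm H))⁻¹ * τ = (σ : Equiv.Perm H)⁻¹ := by group
      rw [this, permAct_mul]
    rw [Finset.sum_congr rfl (fun σ _ => by rw [key σ]), reindex]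
    have : (∑ σ : Q, permAct τ (permAct (σ : Equiv.Perm H)
        (π₀ (permAct ((σ : Equiv.Perm H)⁻¹) v)))) =
        permAct τ (∑ σ : Q, permAct (σ : Equiv.Perm H)
          (π₀ (permAct ((σ : Equiv.Perm H)⁻¹) v))) := by
      rw [show (permAct τ : (H → F) → (H → F)) = (permLin (F := F) τ : (H → F) →ₗ[F] (H → F))
        from rfl, map_sum]
    rw [this]
    show c • _ = permAct τ (c • _)
    rw [show (permAct τ : (H → F) → (H → F)) = (permLin (F := F) τ : (H → F) →ₗ[F] (H → F))
      from rfl, map_smul]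

lemma cayleyIso_conj {s : Equiv.Perm H} {e f : H → F} (h : IsCayleyIso s e f) (v : H → F) :
    convolve f (permAct s v) = permAct s (convolve e v) := by
  funext x
  rw [convolve_eq']
  have hRHS : permAct s (convolve e v) x = ∑ u : H, e (s.symm x * u⁻¹) * v u := by
    show convolve e v (s.symm x) = _
    rw [convolve_eq']
  rw [hRHS]
  rw [← Equiv.sum_comp (s : H ≃ H) (fun z => f (x * z⁻¹) * (permAct s v) z)]
  apply Finset.sum_congr rfl
  intro u _
  have h1 : permAct s v (s u) = v u := by
    simp [permAct]
  rw [h1]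
  congr 1
  have := h (s.symm x) u
  rw [Equiv.apply_symm_apply] at this
  exact this

end Aux

/-- Let `p` be a prime, `H` a finite `p`-group and `F` a finite field
of characteristic different from `p`.  If `S` is a solving set for every `F`-colored
Cayley digraph over `H`, then `S` is a solving set for every right ideal of `F[H]`. -/
theorem solving_set_for_pgroup_codes
    {p : ℕ} (hp : p.Prime)
    {H F : Type*} [Group H] [Fintype H] [DecidableEq H] (hH : IsPGroup p H)
    [Field F] [Fintype F] (hchar : ringChar F ≠ p)
    (S : Set (Equiv.Perm H))
    (hS : ∀ e e' : H → F, (∃ g : Equiv.Perm H, IsCayleyIso g e e') →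
      ∃ s ∈ S, IsCayleyIso s e e') :
    ∀ I J : Submodule F (H → F), IsRightIdeal I → IsRightIdeal J →
      (∃ g : Equiv.Perm H, (J : Set (H → F)) = permAct g '' (I : Set (H → F))) →
      ∃ s ∈ S, (J : Set (H → F)) = permAct s '' (I : Set (H → F)) := by
  classical
  intro I J hI hJ hIJ
  obtain ⟨g, hg⟩ := hIJ
  haveI : Fact p.Prime := ⟨hp⟩
  -- characteristic of F is not p
  have hpF : (p : F) ≠ 0 := by
    intro h0
    have hr : CharP F (ringChar F) := ringChar.charP F
    have hprime : (ringChar F).Prime := CharP.char_is_prime F (ringChar F)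
    have hdvd : ringChar F ∣ p := (CharP.cast_eq_zero_iff F (ringChar F) p).mp h0
    rcases (Nat.Prime.eq_one_or_self_of_dvd hp _ hdvd) with h1 | h1
    · exact hprime.ne_one h1
    · exact hchar h1
  -- the stabilizer of I
  set G : Subgroup (Equiv.Perm H) := stab I with hG
  have hRI : rtrans H ≤ G := rtrans_le_stab hI
  have hRJ : rtrans H ≤ stab J := rtrans_le_stab hJ
  -- membership of g-conjugates of right translations in G
  have hgmemI : ∀ σ ∈ rtrans H, g⁻¹ * σ * g ∈ G := by
    intro σ hσ
    rw [hG, mem_stab]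
    have h1 : permAct g '' (I : Set (H → F)) = J := hg.symm
    have h2 : permAct σ '' (J : Set (H → F)) = J := mem_stab.mp (hRJ hσ)
    rw [permAct_image_mul, permAct_image_mul, h1, h2]
    -- permAct g⁻¹ '' J = I
    rw [← h1, ← permAct_image_mul, inv_mul_cancel]
    rw [show permAct (1 : Equiv.Perm H) = (id : (H → F) → (H → F)) from funext permAct_one]
    exact Set.image_id _
  -- conjugated translation group
  set Rg : Subgroup (Equiv.Perm H) := (rtrans H).map (MulAut.conj g⁻¹).toMonoidHom with hRg
  have hRgG : Rg ≤ G := by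
    rintro _ ⟨σ, hσ, rfl⟩
    have : (MulAut.conj g⁻¹).toMonoidHom σ = g⁻¹ * σ * g := by
      simp [MulAut.conj_apply]
    rw [this]
    exact hgmemI σ hσ
  -- p-group facts
  have hPR : IsPGroup p (rtrans H) := isPGroup_rtrans hH
  have hPRg : IsPGroup p Rg := hPR.map _
  -- subgroups of G
  have hR1 : IsPGroup p ((rtrans H).subgroupOf G) :=
    hPR.of_equiv (Subgroup.subgroupOfEquivOfLe hRI).symm
  have hR2 : IsPGroup p (Rg.subgroupOf G) :=
    hPRg.of_equiv (Subgroup.subgroupOfEquivOfLe hRgG).symm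
  obtain ⟨Q, hQ⟩ := hR1.exists_le_sylow
  obtain ⟨Q₂, hQ₂⟩ := hR2.exists_le_sylow
  obtain ⟨b, hb⟩ := MulAction.exists_smul_eq (↥G) Q Q₂
  -- the adjusted permutation
  set g' : Equiv.Perm H := g * (b : Equiv.Perm H) with hg'
  have hbG : (b : Equiv.Perm H) ∈ G := b.2
  have hbI : permAct (↑b : Equiv.Perm H) '' (I : Set (H → F)) = I := mem_stab.mp hbG
  have hg'I : permAct g' '' (I : Set (H → F)) = J := by
    rw [hg', permAct_image_mul, hbI]
    exact hg.symm
  -- the subgroup Qp of Perm H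
  set Qp : Subgroup (Equiv.Perm H) := (Q : Subgroup G).map G.subtype with hQp
  have hQpG : Qp ≤ G := by
    rintro _ ⟨x, _, rfl⟩
    exact x.2
  have hQpstab : Qp ≤ stab I := hQpG
  -- right translations are in Qp
  have hRQp : ∀ h : H, Equiv.mulRight h ∈ Qp := by
    intro h
    refine ⟨⟨Equiv.mulRight h, hRI (mulRight_mem_rtrans h)⟩, ?_, rfl⟩
    exact hQ (Subgroup.mem_subgroupOf.mpr (mulRight_mem_rtrans h))
  -- conjugates of right translations by g' are in Qp
  have hconjQp : ∀ h : H, g'⁻¹ * Equiv.mulRight h * g' ∈ Qp := by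
    intro h
    have hmem : g⁻¹ * Equiv.mulRight h * g ∈ G := hgmemI _ (mulRight_mem_rtrans h)
    have hmemRg : g⁻¹ * Equiv.mulRight h * g ∈ Rg := by
      refine ⟨Equiv.mulRight h, mulRight_mem_rtrans h, ?_⟩
      simp [MulAut.conj_apply]
    set x : G := ⟨g⁻¹ * Equiv.mulRight h * g, hmem⟩ with hx
    have hxQ₂ : x ∈ (Q₂ : Subgroup G) := hQ₂ (Subgroup.mem_subgroupOf.mpr hmemRg)
    rw [← hb] at hxQ₂
    have hxQ2' : x ∈ MulAut.conj b • (Q : Subgroup G) := hxQ₂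
    rw [Subgroup.mem_pointwise_smul_iff_inv_smul_mem] at hxQ2'
    -- (MulAut.conj b)⁻¹ x = b⁻¹ x b ∈ Q
    have hy : b⁻¹ * x * b ∈ (Q : Subgroup G) := by
      have : (MulAut.conj b)⁻¹ • x = b⁻¹ * x * b := by
        simp [MulAut.smul_def, MulAut.conj_inv_apply, mul_assoc]
      rwa [this] at hxQ2'
    refine ⟨b⁻¹ * x * b, hy, ?_⟩
    show ((b⁻¹ * x * b : G) : Equiv.Perm H) = g'⁻¹ * Equiv.mulRight h * g'
    push_cast
    rw [hg', hx]
    group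
  -- cardinality of Qp is invertible in F
  have hQpP : IsPGroup p Qp := Q.2.map _
  have hcardQp : (Nat.card Qp : F) ≠ 0 := by
    obtain ⟨n, hn⟩ := IsPGroup.iff_card.mp hQpP
    rw [hn]
    push_cast
    exact pow_ne_zero n hpF
  -- Maschke projection
  obtain ⟨π, hπmem, hπfix, hπcomm⟩ := maschke_proj I Qp hQpstab hcardQp
  -- π is a convolution operator
  have hπR : ∀ h : H, ∀ v : H → F,
      π (permAct (Equiv.mulRight h) v) = permAct (Equiv.mulRight h) (π v) :=
    fun h v => hπcomm _ (hRQp h) v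
  set e : H → F := π (Pi.single 1 1) with he
  have hπconv : ∀ v, π v = convolve e v := conv_of_equivariant π hπR
  -- the transported operator
  set T : (H → F) →ₗ[F] (H → F) := (permLin g') ∘ₗ π ∘ₗ (permLin g'⁻¹) with hT
  have hTapply : ∀ v, T v = permAct g' (π (permAct g'⁻¹ v)) := fun v => rfl
  have hTR : ∀ h : H, ∀ v : H → F,
      T (permAct (Equiv.mulRight h) v) = permAct (Equiv.mulRight h) (T v) := by
    intro h v
    rw [hTapply, hTapply]
    have h1 : permAct g'⁻¹ (permAct (Equiv.mulRight h) v) =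
        permAct (g'⁻¹ * Equiv.mulRight h * g') (permAct g'⁻¹ v) := by
      rw [← permAct_mul, ← permAct_mul]
      congr 1
      group
    rw [h1, hπcomm _ (hconjQp h), ← permAct_mul, ← permAct_mul]
    congr 1
    group
  set f : H → F := T (Pi.single 1 1) with hf
  have hTconv : ∀ v, T v = convolve f v := conv_of_equivariant T hTR
  -- T maps into J, fixes J
  have hTmem : ∀ v, T v ∈ J := by
    intro v
    rw [hTapply]
    have : π (permAct g'⁻¹ v) ∈ I := hπmem _
    have hmem : permAct g' (π (permAct g'⁻¹ v)) ∈ permAct g' '' (I : Set (H → F)) :=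
      ⟨_, this, rfl⟩
    rwa [hg'I] at hmem
  have hTfix : ∀ v ∈ J, T v = v := by
    intro v hv
    rw [hTapply]
    have h1 : permAct g'⁻¹ v ∈ I := by
      have : permAct g'⁻¹ '' (J : Set (H → F)) = I := by
        rw [← hg'I, ← permAct_image_mul, inv_mul_cancel]
        rw [show permAct (1 : Equiv.Perm H) = (id : (H → F) → (H → F)) from funext permAct_one]
        exact Set.image_id _
      have h2 : permAct g'⁻¹ v ∈ permAct g'⁻¹ '' (J : Set (H → F)) := ⟨v, hv, rfl⟩
      rw [this] at h2
      exact h2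
    rw [hπfix _ h1, ← permAct_mul, mul_inv_cancel, permAct_one]
  -- IsCayleyIso g' e f
  have hiso : IsCayleyIso g' e f := by
    intro x y
    -- f (g' x * (g' y)⁻¹) = (T (single (g' y) 1)) (g' x)
    have h1 : f (g' x * (g' y)⁻¹) = T (Pi.single (g' y) 1) (g' x) := by
      rw [hTconv, ← permAct_mulRight_eq_convolve]
      show permAct (Equiv.mulRight (g' y)) f (g' x) = _
      rfl
    have h2 : e (x * y⁻¹) = π (Pi.single y 1) x := by
      rw [hπconv, ← permAct_mulRight_eq_convolve]
      rfl
    rw [h1, h2, hTapply]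
    have h3 : permAct g'⁻¹ (Pi.single (g' y) (1:F)) = Pi.single y 1 := by
      funext z
      simp only [permAct, Pi.single_apply]
      have : (g'⁻¹ : Equiv.Perm H).symm z = g' z := rfl
      rw [this]
      by_cases hz : z = y
      · simp [hz]
      · have : g' z ≠ g' y := fun hc => hz (g'.injective hc)
        simp [hz, this]
    rw [h3]
    show π (Pi.single y 1) ((g'.symm) (g' x)) = π (Pi.single y 1) x
    rw [Equiv.symm_apply_apply]
  -- apply the solving set hypothesis
  obtain ⟨s, hsS, hs⟩ := hS e f ⟨g', hiso⟩
  refine ⟨s, hsS, ?_⟩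
  -- conclude
  apply Set.eq_of_subset_of_subset
  · -- J ⊆ permAct s '' I
    intro w hw
    have hw1 : convolve f w = w := by rw [← hTconv]; exact hTfix w hw
    have hw2 : w = permAct s (permAct s⁻¹ w) := by
      rw [← permAct_mul, mul_inv_cancel, permAct_one]
    have hw3 : convolve e (permAct s⁻¹ w) ∈ I := by
      rw [← hπconv]; exact hπmem _
    refine ⟨convolve e (permAct s⁻¹ w), hw3, ?_⟩
    rw [← cayleyIso_conj hs, ← hw2, hw1]
  · -- permAct s '' I ⊆ J
    rintro _ ⟨v, hv, rfl⟩
    have h1 : convolve e v = v := by rw [← hπconv]; exact hπfix v hv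
    have h2 : permAct s v = convolve f (permAct s v) := by
      rw [cayleyIso_conj hs, h1]
    rw [h2, ← hTconv]
    exact hTmem _
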